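/- Let E be a metric space, I a nonempty index set, and (μ_i)_{i∈I} a uniformly tight family of Borel probability measures on E, i.e., for every ε > 0 there is a compact set K ⊆ E with sup_{i∈I} μ_i(E \ K) ≤ ε. Let Φ be a nonempty family of continuous functions from E to ℝ that is directed downward (for all φ, ψ ∈ Φ there exists χ ∈ Φ with χ(x) ≤ min(φ(x), ψ(x)) for all x ∈ E), and assume the pointwise infimum φ*(x) := inf{φ(x) : φ ∈ Φ} is real-valued and continuous on E. Suppose moreover that every function ψ ∈ Φ ∪ {φ*} satisfies the uniform integrability condition lim_{c→∞} sup_{i∈I} ∫_{{|ψ| ≥ c}} |ψ| dμ_i = 0. Then there exists a sequence (φ_n)_{n∈ℕ} in Φ with φ_{n+1} ≤ φ_n pointwise such that lim_{n→∞} sup_{i∈I} ∫_E (φ_n − φ*) dμ_i = 0. -/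

import Mathlib

open MeasureTheory Filter

/-- Common minorant of a finite subfamily of a directed family. -/
lemma finset_minorant {E : Type*}
    (Φ : Set (E → ℝ)) (hΦne : Φ.Nonempty)
    (hdir : ∀ φ ∈ Φ, ∀ ψ ∈ Φ, ∃ χ ∈ Φ, ∀ x, χ x ≤ min (φ x) (ψ x))
    (t : Finset (E → ℝ)) :
    ∃ χ ∈ Φ, ∀ φ ∈ t, φ ∈ Φ → ∀ x, χ x ≤ φ x := by
  classical
  induction t using Finset.induction_on with
  | empty => exact ⟨hΦne.choose, hΦne.choose_spec, by simp⟩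
  | @insert a s ha ih =>
    obtain ⟨χ, hχ, hle⟩ := ih
    by_cases haΦ : a ∈ Φ
    · obtain ⟨χ', hχ', hmin⟩ := hdir χ hχ a haΦ
      refine ⟨χ', hχ', ?_⟩
      intro φ hφ hφΦ x
      rcases Finset.mem_insert.1 hφ with h | h
      · subst h; exact (hmin x).trans (min_le_right _ _)
      · exact ((hmin x).trans (min_le_left _ _)).trans (hle φ h hφΦ x)
    · refine ⟨χ, hχ, ?_⟩
      intro φ hφ hφΦ x
      rcases Finset.mem_insert.1 hφ with h | h
      · exact absurd (h ▸ hφΦ) haΦ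
      · exact hle φ h hφΦ x

/-- Dini-type lemma: a directed-downward family of continuous functions with continuous
pointwise infimum gets uniformly `ε`-close to the infimum on a compact set, at a single
member of the family. -/
lemma dini_aux {E : Type*} [TopologicalSpace E]
    (Φ : Set (E → ℝ)) (hΦne : Φ.Nonempty)
    (hcont : ∀ φ ∈ Φ, Continuous φ)
    (hdir : ∀ φ ∈ Φ, ∀ ψ ∈ Φ, ∃ χ ∈ Φ, ∀ x, χ x ≤ min (φ x) (ψ x))
    (φs : E → ℝ) (hglb : ∀ x, IsGLB ((fun φ : E → ℝ => φ x) '' Φ) (φs x))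
    (hφscont : Continuous φs) {K : Set E} (hK : IsCompact K) {ε : ℝ} (hε : 0 < ε) :
    ∃ φ ∈ Φ, ∀ x ∈ K, φ x ≤ φs x + ε := by
  classical
  -- for each x there is φ ∈ Φ with φ x < φs x + ε
  have hpt : ∀ x : E, ∃ φ ∈ Φ, φ x < φs x + ε := by
    intro x
    by_contra h
    push_neg at h
    have hlb : φs x + ε ∈ lowerBounds ((fun φ : E → ℝ => φ x) '' Φ) := by
      rintro y ⟨φ, hφ, rfl⟩
      exact h φ hφ
    have := (hglb x).2 hlb
    linarith
  -- open cover of K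
  have hcover : K ⊆ ⋃ φ : Φ, {y | (φ : E → ℝ) y < φs y + ε} := by
    intro x _
    obtain ⟨φ, hφ, hlt⟩ := hpt x
    exact Set.mem_iUnion.2 ⟨⟨φ, hφ⟩, hlt⟩
  have hopen : ∀ φ : Φ, IsOpen {y | (φ : E → ℝ) y < φs y + ε} :=
    fun φ => isOpen_lt (hcont φ φ.2) (hφscont.add continuous_const)
  obtain ⟨t, ht⟩ := hK.elim_finite_subcover _ hopen hcover
  obtain ⟨χ, hχ, hle⟩ := finset_minorant Φ hΦne hdir (t.image (fun φ : Φ => (φ : E → ℝ)))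
  refine ⟨χ, hχ, ?_⟩
  intro x hx
  obtain ⟨φ, hφt, hφx⟩ := Set.mem_iUnion₂.1 (ht hx)
  have h1 : χ x ≤ (φ : E → ℝ) x :=
    hle _ (Finset.mem_image.2 ⟨φ, hφt, rfl⟩) φ.2 x
  exact h1.trans hφx.le

/-- Tail estimate: the integral of `|ψ|` outside a set is controlled by the measure of the
complement and the uniform-integrability tail. -/
lemma tail_est {E : Type*} [MeasurableSpace E] [TopologicalSpace E] [OpensMeasurableSpace E]
    (ν : Measure E) (ψ : E → ℝ) (hψ : Continuous ψ) (S : Set E) (c : ℝ) :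
    ∫⁻ x in S, ENNReal.ofReal |ψ x| ∂ν
      ≤ ENNReal.ofReal c * ν S + ∫⁻ x in {x | c ≤ |ψ x|}, ENNReal.ofReal |ψ x| ∂ν := by
  have hTmeas : MeasurableSet {x | c ≤ |ψ x|} :=
    (isClosed_le continuous_const hψ.abs).measurableSet
  have hpt : ∀ x, ENNReal.ofReal |ψ x|
      ≤ ENNReal.ofReal c
        + Set.indicator {x | c ≤ |ψ x|} (fun x => ENNReal.ofReal |ψ x|) x := by
    intro x
    by_cases hx : c ≤ |ψ x|
    · rw [Set.indicator_of_mem (show x ∈ {x | c ≤ |ψ x|} from hx)]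
      exact le_add_self
    · rw [Set.indicator_of_notMem (show x ∉ {x | c ≤ |ψ x|} from hx)]
      push_neg at hx
      simpa using ENNReal.ofReal_le_ofReal hx.le
  calc ∫⁻ x in S, ENNReal.ofReal |ψ x| ∂ν
      ≤ ∫⁻ x in S, (ENNReal.ofReal c
          + Set.indicator {x | c ≤ |ψ x|} (fun x => ENNReal.ofReal |ψ x|) x) ∂ν :=
        lintegral_mono hpt
    _ = ENNReal.ofReal c * ν S
          + ∫⁻ x in S, Set.indicator {x | c ≤ |ψ x|}
              (fun x => ENNReal.ofReal |ψ x|) x ∂ν := by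
        rw [lintegral_add_left measurable_const, setLIntegral_const]
    _ ≤ ENNReal.ofReal c * ν S + ∫⁻ x in {x | c ≤ |ψ x|}, ENNReal.ofReal |ψ x| ∂ν := by
        refine add_le_add (le_refl _) ?_
        calc ∫⁻ x in S, Set.indicator {x | c ≤ |ψ x|}
                (fun x => ENNReal.ofReal |ψ x|) x ∂ν
            ≤ ∫⁻ x, Set.indicator {x | c ≤ |ψ x|}
                (fun x => ENNReal.ofReal |ψ x|) x ∂ν := setLIntegral_le_lintegral _ _
          _ = ∫⁻ x in {x | c ≤ |ψ x|}, ENNReal.ofReal |ψ x| ∂ν :=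
              lintegral_indicator hTmeas _

/-- Key lemma: for every `ε > 0` there is a member of the family whose gap to the infimum
has small upper integral. -/
lemma key_eps {E : Type*} [MetricSpace E] [MeasurableSpace E] [BorelSpace E]
    {I : Type*} [Nonempty I]
    (μ : I → Measure E) [∀ i, IsProbabilityMeasure (μ i)]
    (htight : ∀ ε : ENNReal, 0 < ε → ∃ K : Set E, IsCompact K ∧ ⨆ i, μ i Kᶜ ≤ ε)
    (Φ : Set (E → ℝ)) (hΦne : Φ.Nonempty)
    (hcont : ∀ φ ∈ Φ, Continuous φ)
    (hdir : ∀ φ ∈ Φ, ∀ ψ ∈ Φ, ∃ χ ∈ Φ, ∀ x, χ x ≤ min (φ x) (ψ x))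
    (φs : E → ℝ) (hglb : ∀ x, IsGLB ((fun φ : E → ℝ => φ x) '' Φ) (φs x))
    (hφscont : Continuous φs)
    (hUI : ∀ ψ ∈ insert φs Φ,
      Tendsto (fun c : ℝ =>
          ⨆ i, ∫⁻ x in {x | c ≤ |ψ x|}, ENNReal.ofReal |ψ x| ∂(μ i)) atTop (nhds 0))
    {ε : ℝ} (hε : 0 < ε) :
    ∃ χ ∈ Φ, (⨆ i, ∫⁻ x, ENNReal.ofReal (χ x - φs x) ∂(μ i)) ≤ ENNReal.ofReal (5 * ε) := by
  classical
  obtain ⟨ψ0, hψ0⟩ := hΦne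
  have hεE : (0 : ENNReal) < ENNReal.ofReal ε := ENNReal.ofReal_pos.2 hε
  -- choose a cutoff level c ≥ 1 making both tails small
  have h1 := (hUI ψ0 (Set.mem_insert_of_mem _ hψ0)).eventually_lt_const hεE
  have h2 := (hUI φs (Set.mem_insert _ _)).eventually_lt_const hεE
  obtain ⟨c, hc1, hcψ0, hcφs⟩ := ((eventually_ge_atTop (1 : ℝ)).and (h1.and h2)).exists
  have hc0 : (0 : ℝ) < c := lt_of_lt_of_le one_pos hc1
  set δ : ℝ := ε / c with hδdef
  have hδ0 : 0 < δ := div_pos hε hc0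
  have hcδ : c * δ = ε := by rw [hδdef]; field_simp [hc0.ne']
  -- tightness
  obtain ⟨K, hK, hKtight⟩ := htight (ENNReal.ofReal δ) (ENNReal.ofReal_pos.2 hδ0)
  -- Dini
  obtain ⟨φ1, hφ1, hφ1K⟩ := dini_aux Φ ⟨ψ0, hψ0⟩ hcont hdir φs hglb hφscont hK hε
  -- common minorant
  obtain ⟨χ, hχ, hmin⟩ := hdir φ1 hφ1 ψ0 hψ0
  have hlbχ : ∀ x, φs x ≤ χ x := fun x => (hglb x).1 ⟨χ, hχ, rfl⟩
  refine ⟨χ, hχ, ?_⟩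
  have hψ0cont := hcont ψ0 hψ0
  -- per-measure estimate
  have hbound : ∀ i, ∫⁻ x, ENNReal.ofReal (χ x - φs x) ∂(μ i)
      ≤ ENNReal.ofReal ε
        + ((ENNReal.ofReal c * ENNReal.ofReal δ + ENNReal.ofReal ε)
          + (ENNReal.ofReal c * ENNReal.ofReal δ + ENNReal.ofReal ε)) := by
    intro i
    have hμKc : μ i Kᶜ ≤ ENNReal.ofReal δ := (le_iSup (fun i => μ i Kᶜ) i).trans hKtight
    have hsplit : ∫⁻ x, ENNReal.ofReal (χ x - φs x) ∂(μ i)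
        = ∫⁻ x in K, ENNReal.ofReal (χ x - φs x) ∂(μ i)
          + ∫⁻ x in Kᶜ, ENNReal.ofReal (χ x - φs x) ∂(μ i) :=
      (lintegral_add_compl _ hK.measurableSet).symm
    rw [hsplit]
    refine add_le_add ?_ ?_
    · -- on K: the gap is at most ε
      calc ∫⁻ x in K, ENNReal.ofReal (χ x - φs x) ∂(μ i)
          ≤ ∫⁻ _ in K, ENNReal.ofReal ε ∂(μ i) := by
            refine setLIntegral_mono measurable_const ?_
            intro x hx
            refine ENNReal.ofReal_le_ofReal ?_
            have := (hmin x).trans (min_le_left _ _)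
            have := hφ1K x hx
            linarith
        _ = ENNReal.ofReal ε * μ i K := setLIntegral_const _ _
        _ ≤ ENNReal.ofReal ε * 1 := by gcongr; exact prob_le_one
        _ = ENNReal.ofReal ε := mul_one _
    · -- off K: bound the gap by |ψ0| + |φs| and use tails
      have hpt : ∀ x, ENNReal.ofReal (χ x - φs x)
          ≤ ENNReal.ofReal |ψ0 x| + ENNReal.ofReal |φs x| := by
        intro x
        rw [← ENNReal.ofReal_add (abs_nonneg _) (abs_nonneg _)]
        refine ENNReal.ofReal_le_ofReal ?_
        have h1 := (hmin x).trans (min_le_right _ _)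
        have h2 := abs_le.1 (le_refl |ψ0 x|)
        have := neg_abs_le (φs x)
        have := le_abs_self (ψ0 x)
        linarith [hlbχ x]
      calc ∫⁻ x in Kᶜ, ENNReal.ofReal (χ x - φs x) ∂(μ i)
          ≤ ∫⁻ x in Kᶜ, (ENNReal.ofReal |ψ0 x| + ENNReal.ofReal |φs x|) ∂(μ i) :=
            lintegral_mono hpt
        _ = ∫⁻ x in Kᶜ, ENNReal.ofReal |ψ0 x| ∂(μ i)
            + ∫⁻ x in Kᶜ, ENNReal.ofReal |φs x| ∂(μ i) :=
            lintegral_add_left (hψ0cont.abs.measurable.ennreal_ofReal) _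
        _ ≤ (ENNReal.ofReal c * ENNReal.ofReal δ + ENNReal.ofReal ε)
            + (ENNReal.ofReal c * ENNReal.ofReal δ + ENNReal.ofReal ε) := by
            refine add_le_add ?_ ?_
            · refine (tail_est (μ i) ψ0 hψ0cont Kᶜ c).trans ?_
              refine add_le_add ?_ ?_
              · gcongr
              · exact ((le_iSup (fun i => ∫⁻ x in {x | c ≤ |ψ0 x|},
                  ENNReal.ofReal |ψ0 x| ∂(μ i)) i).trans hcψ0.le)
            · refine (tail_est (μ i) φs hφscont Kᶜ c).trans ?_
              refine add_le_add ?_ ?_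
              · gcongr
              · exact ((le_iSup (fun i => ∫⁻ x in {x | c ≤ |φs x|},
                  ENNReal.ofReal |φs x| ∂(μ i)) i).trans hcφs.le)
  refine (iSup_le hbound).trans ?_
  have : ENNReal.ofReal c * ENNReal.ofReal δ = ENNReal.ofReal ε := by
    rw [← ENNReal.ofReal_mul hc0.le, hcδ]
  rw [this, show 5 * ε = ε + (ε + ε + (ε + ε)) by ring,
    ENNReal.ofReal_add hε.le (by positivity : (0:ℝ) ≤ ε + ε + (ε + ε)),
    ENNReal.ofReal_add (by positivity : (0:ℝ) ≤ ε + ε) (by positivity : (0:ℝ) ≤ ε + ε),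
    ENNReal.ofReal_add hε.le hε.le]

theorem stmt3 {E : Type*} [MetricSpace E] [MeasurableSpace E] [BorelSpace E]
    {I : Type*} [Nonempty I]
    (μ : I → Measure E) [∀ i, IsProbabilityMeasure (μ i)]
    (htight : ∀ ε : ENNReal, 0 < ε → ∃ K : Set E, IsCompact K ∧ ⨆ i, μ i Kᶜ ≤ ε)
    (Φ : Set (E → ℝ)) (hΦne : Φ.Nonempty)
    (hcont : ∀ φ ∈ Φ, Continuous φ)
    (hdir : ∀ φ ∈ Φ, ∀ ψ ∈ Φ, ∃ χ ∈ Φ, ∀ x, χ x ≤ min (φ x) (ψ x))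
    (φs : E → ℝ) (hglb : ∀ x, IsGLB ((fun φ : E → ℝ => φ x) '' Φ) (φs x))
    (hφscont : Continuous φs)
    (hUI : ∀ ψ ∈ insert φs Φ,
      Tendsto (fun c : ℝ =>
          ⨆ i, ∫⁻ x in {x | c ≤ |ψ x|}, ENNReal.ofReal |ψ x| ∂(μ i)) atTop (nhds 0)) :
    ∃ φ : ℕ → E → ℝ, (∀ n, φ n ∈ Φ) ∧ (∀ n x, φ (n + 1) x ≤ φ n x) ∧
      Tendsto (fun n => ⨆ i, ∫⁻ x, ENNReal.ofReal (φ n x - φs x) ∂(μ i)) atTop (nhds 0) := by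
  classical
  set B : ℕ → ENNReal := fun n => ENNReal.ofReal (5 * (1 / (n + 1))) with hBdef
  -- at each step we can go below any given member while keeping the integral small
  have H : ∀ (n : ℕ) (ψ : E → ℝ), ψ ∈ Φ → ∃ χ : E → ℝ, χ ∈ Φ ∧ (∀ x, χ x ≤ ψ x) ∧
      (⨆ i, ∫⁻ x, ENNReal.ofReal (χ x - φs x) ∂(μ i)) ≤ B n := by
    intro n ψ hψ
    have hpos : (0 : ℝ) < 1 / (n + 1) := by positivity
    obtain ⟨χ0, hχ0, hχ0int⟩ := key_eps μ htight Φ hΦne hcont hdir φs hglb hφscont hUI hpos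
    obtain ⟨χ, hχ, hmin⟩ := hdir χ0 hχ0 ψ hψ
    refine ⟨χ, hχ, fun x => (hmin x).trans (min_le_right _ _), ?_⟩
    refine le_trans ?_ hχ0int
    refine iSup_mono fun i => lintegral_mono fun x => ENNReal.ofReal_le_ofReal ?_
    have := (hmin x).trans (min_le_left _ _)
    linarith
  choose F hF1 hF2 hF3 using H
  obtain ⟨ψ0, hψ0⟩ := hΦne
  -- recursive sequence
  let seq : ℕ → {ψ : E → ℝ // ψ ∈ Φ} := fun n =>
    Nat.rec ⟨F 0 ψ0 hψ0, hF1 0 ψ0 hψ0⟩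
      (fun n p => ⟨F (n + 1) p.1 p.2, hF1 (n + 1) p.1 p.2⟩) n
  refine ⟨fun n => (seq n).1, fun n => (seq n).2, ?_, ?_⟩
  · intro n x
    exact hF2 (n + 1) (seq n).1 (seq n).2 x
  · have hb : ∀ n, (⨆ i, ∫⁻ x, ENNReal.ofReal ((seq n).1 x - φs x) ∂(μ i)) ≤ B n := by
      intro n
      cases n with
      | zero => exact hF3 0 ψ0 hψ0
      | succ m => exact hF3 (m + 1) (seq m).1 (seq m).2
    have hBlim : Tendsto B atTop (nhds 0) := by
      have h0 : Tendsto (fun n : ℕ => 5 * (1 / ((n : ℝ) + 1))) atTop (nhds 0) := by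
        have : Tendsto (fun n : ℕ => 1 / ((n : ℝ) + 1)) atTop (nhds 0) :=
          tendsto_one_div_add_atTop_nhds_zero_nat
        simpa using this.const_mul (5 : ℝ)
      have := (ENNReal.continuous_ofReal.tendsto 0).comp h0
      simpa [hBdef, Function.comp_def] using this
    exact tendsto_of_tendsto_of_tendsto_of_le_of_le tendsto_const_nhds hBlim
      (fun n => zero_le) hb
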